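/- Let H be a Hopf algebra with invertible antipode, δ : H → ℂ a character and σ ∈ H a group-like element; make ℂ a right H-module via δ and a left H-comodule via σ. Then ^σℂ_δ is a stable right-left anti-Yetter-Drinfeld module over H if and only if (δ,σ) is a modular pair in involution. -/

import Mathlib

/-!
Statement 2: Let `H` be a Hopf algebra (over `ℂ`) with invertible antipode,
`δ : H → ℂ` a character and `σ ∈ H` a group-like element; make `ℂ` a right
`H`-module via `δ` and a left `H`-comodule via `σ`.  Then `^σℂ_δ` is a stable
right-left anti-Yetter-Drinfeld module over `H` if and only if `(δ, σ)` is a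
modular pair in involution.
-/

open TensorProduct

noncomputable section

variable {H : Type*} [Ring H] [HopfAlgebra ℂ H]

/-- A group-like element of a Hopf algebra: `Δ(σ) = σ ⊗ σ` and `ε(σ) = 1`. -/
def IsGroupLike (σ : H) : Prop :=
  Coalgebra.counit (R := ℂ) σ = 1 ∧ Coalgebra.comul (R := ℂ) σ = σ ⊗ₜ[ℂ] σ

/-- The twisted antipode `S_δ(h) = δ(h₍₁₎) S(h₍₂₎)` associated to a character `δ`. -/
def twistedAntipode (δ : H →ₐ[ℂ] ℂ) : H →ₗ[ℂ] H :=
  (TensorProduct.lid ℂ H).toLinearMap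
    ∘ₗ TensorProduct.map δ.toLinearMap (HopfAlgebra.antipode (R := ℂ))
    ∘ₗ Coalgebra.comul

/-- `(δ, σ)` is a modular pair in involution:  `δ(σ) = 1` and
`S_δ²(h) = σ h σ⁻¹` for all `h` (for a group-like `σ`, `σ⁻¹ = S(σ)`). -/
def IsModularPairInInvolution (δ : H →ₐ[ℂ] ℂ) (σ : H) : Prop :=
  δ σ = 1 ∧
    ∀ h : H, twistedAntipode δ (twistedAntipode δ h) =
      σ * h * HopfAlgebra.antipode (R := ℂ) σ

/-- Iterated comultiplication `h ↦ h₍₁₎ ⊗ (h₍₂₎ ⊗ h₍₃₎)`. -/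
def comul₂ : H →ₗ[ℂ] H ⊗[ℂ] (H ⊗[ℂ] H) :=
  LinearMap.lTensor H (Coalgebra.comul (R := ℂ)) ∘ₗ Coalgebra.comul

/-- The linear map `h ↦ Σ δ(h₍₂₎) • (S(h₍₃₎) * σ * h₍₁₎)`, i.e. the right-hand
side `S(h₍₃₎) m₍₋₁₎ h₍₁₎ ⊗ m₍₀₎ ◁ h₍₂₎` of the anti-Yetter-Drinfeld condition
for the module-comodule `^σℂ_δ` (identifying `H ⊗ ℂ ≅ H`). -/
def aydMap (δ : H →ₐ[ℂ] ℂ) (σ : H) : H →ₗ[ℂ] H :=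
  LinearMap.mul' ℂ H
    ∘ₗ TensorProduct.map (LinearMap.mulRight ℂ σ) LinearMap.id
    ∘ₗ (TensorProduct.comm ℂ H H).toLinearMap
    ∘ₗ LinearMap.lTensor H
        ((TensorProduct.lid ℂ H).toLinearMap
          ∘ₗ TensorProduct.map δ.toLinearMap (HopfAlgebra.antipode (R := ℂ)))
    ∘ₗ comul₂

/-- `^σℂ_δ` is a stable right-left anti-Yetter-Drinfeld module over `H`:
the AYD compatibility `∇(1 ◁ h) = S(h₍₃₎) σ h₍₁₎ ⊗ δ(h₍₂₎)` (as an identity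
in `H ⊗ ℂ ≅ H`) together with the stability condition `1 ◁ σ = 1`,
i.e. `δ(σ) = 1`. -/
def IsStableAntiYetterDrinfeld (δ : H →ₐ[ℂ] ℂ) (σ : H) : Prop :=
  δ σ = 1 ∧ ∀ h : H, aydMap δ σ h = δ h • σ

namespace SaydProof
open Coalgebra HopfAlgebra
variable {H : Type*} [Ring H] [HopfAlgebra ℂ H]
local notation "𝑺" => HopfAlgebra.antipode (R := ℂ)

def tri3 (f g k : H →ₗ[ℂ] H) : H ⊗[ℂ] (H ⊗[ℂ] H) →ₗ[ℂ] H :=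
  LinearMap.mul' ℂ H ∘ₗ TensorProduct.map f (LinearMap.mul' ℂ H ∘ₗ TensorProduct.map g k)

@[simp] lemma tri3_tmul (f g k : H →ₗ[ℂ] H) (x y z : H) :
    tri3 f g k (x ⊗ₜ[ℂ] (y ⊗ₜ[ℂ] z)) = f x * (g y * k z) := by
  simp [tri3]

def oneRepr : Repr ℂ (1 : H) Unit where
  index := Finset.univ
  left _ := 1
  right _ := 1
  eq := by simp [Algebra.TensorProduct.one_def]

lemma antipode_one : 𝑺 (1 : H) = 1 := by
  have := sum_antipode_mul_eq_smul (R := ℂ) (oneRepr (H := H))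
  simpa [oneRepr] using this

def glRepr {σ : H} (hσc : Coalgebra.comul (R := ℂ) σ = σ ⊗ₜ[ℂ] σ) : Repr ℂ σ Unit where
  index := Finset.univ
  left _ := σ
  right _ := σ
  eq := by simpa using hσc.symm

lemma switch {K : Type*} [AddCommMonoid K] [Module ℂ K]
    (Φ : H ⊗[ℂ] (H ⊗[ℂ] H) →ₗ[ℂ] K) {a : H} {ι κ Λ : Type*} (r : Repr ℂ a ι)
    (u : (i : ι) → Repr ℂ (r.left i) κ) (v : (i : ι) → Repr ℂ (r.right i) Λ) :
    ∑ i ∈ r.index, ∑ j ∈ (u i).index,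
      Φ ((u i).left j ⊗ₜ[ℂ] ((u i).right j ⊗ₜ[ℂ] r.right i))
    = ∑ i ∈ r.index, ∑ j ∈ (v i).index,
      Φ (r.left i ⊗ₜ[ℂ] ((v i).left j ⊗ₜ[ℂ] (v i).right j)) := by
  have := sum_tmul_tmul_eq (R := ℂ) r u v
  apply_fun Φ at this
  rw [map_sum, map_sum] at this
  simp only [map_sum] at this
  exact this

lemma sum_counit_smul_left {a : H} {ι_r : Type*} (r : Repr ℂ a ι_r) :
    ∑ i ∈ r.index, counit (R := ℂ) (r.left i) • r.right i = a := by
  have := sum_counit_tmul_eq (R := ℂ) r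
  apply_fun (TensorProduct.lid ℂ H) at this
  rw [map_sum] at this
  simp only [lid_tmul] at this
  simpa using this

lemma sum_counit_smul_right {a : H} {ι_r : Type*} (r : Repr ℂ a ι_r) :
    ∑ i ∈ r.index, counit (R := ℂ) (r.right i) • r.left i = a := by
  have := sum_tmul_counit_eq (R := ℂ) r
  apply_fun (TensorProduct.rid ℂ H) at this
  rw [map_sum] at this
  simp only [rid_tmul] at this
  simpa using this

lemma sum_counit_smul_map_left {K : Type*} [AddCommMonoid K] [Module ℂ K]
    {a : H} {ι_r : Type*} (r : Repr ℂ a ι_r) (f : H →ₗ[ℂ] K) :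
    ∑ i ∈ r.index, counit (R := ℂ) (r.left i) • f (r.right i) = f a := by
  simp only [← map_smul, ← map_sum, sum_counit_smul_left r]

lemma sum_counit_smul_map_right {K : Type*} [AddCommMonoid K] [Module ℂ K]
    {a : H} {ι_r : Type*} (r : Repr ℂ a ι_r) (f : H →ₗ[ℂ] K) :
    ∑ i ∈ r.index, counit (R := ℂ) (r.right i) • f (r.left i) = f a := by
  simp only [← map_smul, ← map_sum, sum_counit_smul_right r]

def mulRepr {a b : H} {ι κ : Type*} (ra : Repr ℂ a ι) (rb : Repr ℂ b κ) :
    Repr ℂ (a * b) (ι × κ) where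
  index := ra.index ×ˢ rb.index
  left p := ra.left p.1 * rb.left p.2
  right p := ra.right p.1 * rb.right p.2
  eq := by
    rw [Bialgebra.comul_mul, ← ra.eq, ← rb.eq, Finset.sum_mul_sum, Finset.sum_product]
    simp [Algebra.TensorProduct.tmul_mul_tmul]

lemma W {a b : H} {ι_ra : Type*} (ra : Repr ℂ a ι_ra) {ι_rb : Type*} (rb : Repr ℂ b ι_rb) :
    ∑ i ∈ ra.index, ∑ j ∈ rb.index,
      𝑺 (ra.left i * rb.left j) * (ra.right i * rb.right j)
    = (counit (R := ℂ) a * counit (R := ℂ) b) • (1 : H) := by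
  have := sum_antipode_mul_eq_smul (R := ℂ) (mulRepr ra rb)
  simp only [mulRepr] at this
  rw [Finset.sum_product] at this
  simpa [Bialgebra.counit_mul] using this

lemma antipode_mul (a b : H) : 𝑺 (a * b) = 𝑺 b * 𝑺 a := by
  set ra := ℛ ℂ a with hra
  set rb := ℛ ℂ b with hrb
  set ua : (i : ra.ι) → Repr ℂ (ra.left i) (H × H) := fun i => ℛ ℂ _ with hua
  set va : (i : ra.ι) → Repr ℂ (ra.right i) (H × H) := fun i => ℛ ℂ _ with hva
  set xb : (j : rb.ι) → Repr ℂ (rb.left j) (H × H) := fun j => ℛ ℂ _ with hxb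
  set wb : (j : rb.ι) → Repr ℂ (rb.right j) (H × H) := fun j => ℛ ℂ _ with hwb
  have step1 :
      (∑ i ∈ ra.index, ∑ k ∈ (va i).index, ∑ j ∈ rb.index, ∑ l ∈ (wb j).index,
        𝑺 (ra.left i * rb.left j) *
          (((va i).left k * (wb j).left l) *
            (𝑺 ((wb j).right l) * 𝑺 ((va i).right k))))
      = 𝑺 (a * b) := by
    have h1 : ∀ i ∈ ra.index, ∀ k ∈ (va i).index, ∀ j ∈ rb.index,
        (∑ l ∈ (wb j).index,
          𝑺 (ra.left i * rb.left j) *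
            (((va i).left k * (wb j).left l) *
              (𝑺 ((wb j).right l) * 𝑺 ((va i).right k))))
        = counit (R := ℂ) (rb.right j) •
            (𝑺 (ra.left i * rb.left j) * ((va i).left k * 𝑺 ((va i).right k))) := by
      intro i _ k _ j _
      have hterm : ∀ l, ((va i).left k * (wb j).left l) *
              (𝑺 ((wb j).right l) * 𝑺 ((va i).right k))
          = (va i).left k *
              (((wb j).left l * 𝑺 ((wb j).right l)) * 𝑺 ((va i).right k)) := by
        intro l; simp only [mul_assoc]
      simp only [hterm, ← Finset.mul_sum, ← Finset.sum_mul]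
      rw [sum_mul_antipode_eq_smul (R := ℂ) (wb j)]
      simp [smul_mul_assoc, mul_smul_comm]
    rw [Finset.sum_congr rfl (fun i hi => Finset.sum_congr rfl (fun k hk =>
      Finset.sum_congr rfl (fun j hj => h1 i hi k hk j hj)))]
    have h2 : ∀ i ∈ ra.index, ∀ k ∈ (va i).index,
        (∑ j ∈ rb.index, counit (R := ℂ) (rb.right j) •
          (𝑺 (ra.left i * rb.left j) * ((va i).left k * 𝑺 ((va i).right k))))
        = 𝑺 (ra.left i * b) * ((va i).left k * 𝑺 ((va i).right k)) := by
      intro i _ k _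
      have := sum_counit_smul_map_right rb
        (LinearMap.mulRight ℂ ((va i).left k * 𝑺 ((va i).right k)) ∘ₗ 𝑺
          ∘ₗ LinearMap.mulLeft ℂ (ra.left i))
      simpa [mul_assoc] using this
    rw [Finset.sum_congr rfl (fun i hi => Finset.sum_congr rfl (fun k hk => h2 i hi k hk))]
    have h3 : ∀ i ∈ ra.index,
        (∑ k ∈ (va i).index,
          𝑺 (ra.left i * b) * ((va i).left k * 𝑺 ((va i).right k)))
        = counit (R := ℂ) (ra.right i) • 𝑺 (ra.left i * b) := by
      intro i _
      rw [← Finset.mul_sum, sum_mul_antipode_eq_smul (R := ℂ) (va i)]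
      simp [mul_smul_comm]
    rw [Finset.sum_congr rfl h3]
    have := sum_counit_smul_map_right ra (𝑺 ∘ₗ LinearMap.mulRight ℂ b)
    simpa using this
  have step2 : ∀ i ∈ ra.index, ∀ k ∈ (va i).index,
      (∑ j ∈ rb.index, ∑ l ∈ (xb j).index,
        𝑺 (ra.left i * (xb j).left l) *
          (((va i).left k * (xb j).right l) *
            (𝑺 (rb.right j) * 𝑺 ((va i).right k))))
      = ∑ j ∈ rb.index, ∑ l ∈ (wb j).index,
        𝑺 (ra.left i * rb.left j) *
          (((va i).left k * (wb j).left l) *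
            (𝑺 ((wb j).right l) * 𝑺 ((va i).right k))) := by
    intro i _ k _
    have := switch (tri3 (𝑺 ∘ₗ LinearMap.mulLeft ℂ (ra.left i))
      (LinearMap.mulLeft ℂ ((va i).left k))
      (LinearMap.mulRight ℂ (𝑺 ((va i).right k)) ∘ₗ 𝑺)) rb xb wb
    simpa using this
  have step3 :
      (∑ i ∈ ra.index, ∑ k ∈ (ua i).index, ∑ j ∈ rb.index, ∑ l ∈ (xb j).index,
        𝑺 ((ua i).left k * (xb j).left l) *
          (((ua i).right k * (xb j).right l) *
            (𝑺 (rb.right j) * 𝑺 (ra.right i))))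
      = ∑ i ∈ ra.index, ∑ k ∈ (va i).index, ∑ j ∈ rb.index, ∑ l ∈ (xb j).index,
        𝑺 (ra.left i * (xb j).left l) *
          (((va i).left k * (xb j).right l) *
            (𝑺 (rb.right j) * 𝑺 ((va i).right k))) := by
    have := switch (∑ j ∈ rb.index, ∑ l ∈ (xb j).index,
      tri3 (𝑺 ∘ₗ LinearMap.mulRight ℂ ((xb j).left l))
        (LinearMap.mulRight ℂ ((xb j).right l))
        (LinearMap.mulLeft ℂ (𝑺 (rb.right j)) ∘ₗ 𝑺)) ra ua va
    simpa [LinearMap.sum_apply] using this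
  have step4 :
      (∑ i ∈ ra.index, ∑ k ∈ (ua i).index, ∑ j ∈ rb.index, ∑ l ∈ (xb j).index,
        𝑺 ((ua i).left k * (xb j).left l) *
          (((ua i).right k * (xb j).right l) *
            (𝑺 (rb.right j) * 𝑺 (ra.right i))))
      = 𝑺 b * 𝑺 a := by
    have h1 : ∀ i ∈ ra.index, ∀ j ∈ rb.index,
        (∑ k ∈ (ua i).index, ∑ l ∈ (xb j).index,
          𝑺 ((ua i).left k * (xb j).left l) *
            (((ua i).right k * (xb j).right l) *
              (𝑺 (rb.right j) * 𝑺 (ra.right i))))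
        = (counit (R := ℂ) (ra.left i) * counit (R := ℂ) (rb.left j)) •
            (𝑺 (rb.right j) * 𝑺 (ra.right i)) := by
      intro i _ j _
      have hterm : ∀ k l, 𝑺 ((ua i).left k * (xb j).left l) *
            (((ua i).right k * (xb j).right l) * (𝑺 (rb.right j) * 𝑺 (ra.right i)))
          = (𝑺 ((ua i).left k * (xb j).left l) * ((ua i).right k * (xb j).right l)) *
              (𝑺 (rb.right j) * 𝑺 (ra.right i)) := by
        intro k l; simp only [mul_assoc]
      simp only [hterm, ← Finset.sum_mul]
      rw [W (ua i) (xb j)]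
      simp [smul_mul_assoc]
    have hcomm : ∀ i ∈ ra.index,
        (∑ k ∈ (ua i).index, ∑ j ∈ rb.index, ∑ l ∈ (xb j).index,
          𝑺 ((ua i).left k * (xb j).left l) *
            (((ua i).right k * (xb j).right l) *
              (𝑺 (rb.right j) * 𝑺 (ra.right i))))
        = ∑ j ∈ rb.index, ∑ k ∈ (ua i).index, ∑ l ∈ (xb j).index,
          𝑺 ((ua i).left k * (xb j).left l) *
            (((ua i).right k * (xb j).right l) *
              (𝑺 (rb.right j) * 𝑺 (ra.right i))) := by
      intro i _; exact Finset.sum_comm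
    rw [Finset.sum_congr rfl hcomm]
    rw [Finset.sum_congr rfl (fun i hi => Finset.sum_congr rfl (fun j hj => h1 i hi j hj))]
    have h2 : ∀ i ∈ ra.index,
        (∑ j ∈ rb.index,
          (counit (R := ℂ) (ra.left i) * counit (R := ℂ) (rb.left j)) •
            (𝑺 (rb.right j) * 𝑺 (ra.right i)))
        = counit (R := ℂ) (ra.left i) • (𝑺 b * 𝑺 (ra.right i)) := by
      intro i _
      simp only [mul_smul, ← Finset.smul_sum]
      congr 1
      have := sum_counit_smul_map_left rb
        (LinearMap.mulRight ℂ (𝑺 (ra.right i)) ∘ₗ 𝑺)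
      simpa using this
    rw [Finset.sum_congr rfl h2]
    have := sum_counit_smul_map_left ra (LinearMap.mulLeft ℂ (𝑺 b) ∘ₗ 𝑺)
    simpa using this
  exact step1.symm.trans ((Finset.sum_congr rfl fun i hi => Finset.sum_congr rfl fun k hk =>
    (step2 i hi k hk).symm).trans (step3.symm.trans step4))

/-- `h ↦ ∑ S(h₂) ⊗ S(h₁)`. -/
def Gmap : H →ₗ[ℂ] H ⊗[ℂ] H :=
  (TensorProduct.comm ℂ H H).toLinearMap ∘ₗ TensorProduct.map 𝑺 𝑺 ∘ₗ Coalgebra.comul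

lemma Gmap_repr {x : H} {ι_r : Type*} (r : Repr ℂ x ι_r) :
    Gmap x = ∑ i ∈ r.index, 𝑺 (r.right i) ⊗ₜ[ℂ] 𝑺 (r.left i) := by
  have : Coalgebra.comul (R := ℂ) x = ∑ i ∈ r.index, r.left i ⊗ₜ[ℂ] r.right i := r.eq.symm
  simp [Gmap, this, map_sum]

lemma alpha {x : H} {ι_r : Type*} (r : Repr ℂ x ι_r) :
    ∑ i ∈ r.index, Coalgebra.comul (R := ℂ) (r.left i) * Coalgebra.comul (R := ℂ) (𝑺 (r.right i))
    = counit (R := ℂ) x • (1 : H ⊗[ℂ] H) := by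
  have : ∀ i, Coalgebra.comul (R := ℂ) (r.left i) * Coalgebra.comul (R := ℂ) (𝑺 (r.right i))
      = Coalgebra.comul (R := ℂ) (r.left i * 𝑺 (r.right i)) := by
    intro i; rw [Bialgebra.comul_mul]
  simp only [this, ← map_sum, sum_mul_antipode_eq_smul (R := ℂ) r, map_smul, Bialgebra.comul_one]

lemma beta0 (c : H) {x : H} {ι_r : Type*} (r : Repr ℂ x ι_r) :
    ∑ j ∈ r.index, (𝑺 (r.left j) ⊗ₜ[ℂ] c) * Coalgebra.comul (R := ℂ) (r.right j)
    = (1 : H) ⊗ₜ[ℂ] (c * x) := by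
  set p : (j : r.ι) → Repr ℂ (r.left j) (H × H) := fun j => ℛ ℂ _ with hp
  set w : (j : r.ι) → Repr ℂ (r.right j) (H × H) := fun j => ℛ ℂ _ with hw
  have hswitch := switch
    (TensorProduct.map (LinearMap.mul' ℂ H ∘ₗ TensorProduct.map 𝑺 LinearMap.id)
        (LinearMap.mulLeft ℂ c)
      ∘ₗ (TensorProduct.assoc ℂ H H H).symm.toLinearMap) r p w
  simp only [LinearMap.comp_apply, LinearEquiv.coe_coe, assoc_symm_tmul,
    TensorProduct.map_tmul, LinearMap.mul'_apply, LinearMap.id_coe, id_eq,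
    LinearMap.mulLeft_apply] at hswitch
  have hL : ∀ j ∈ r.index,
      (∑ k ∈ (p j).index, (𝑺 ((p j).left k) * (p j).right k) ⊗ₜ[ℂ] (c * r.right j))
      = counit (R := ℂ) (r.left j) • ((1 : H) ⊗ₜ[ℂ] (c * r.right j)) := by
    intro j _
    rw [← TensorProduct.sum_tmul, sum_antipode_mul_eq_smul (R := ℂ) (p j), smul_tmul']
  rw [Finset.sum_congr rfl hL] at hswitch
  have hL2 : (∑ j ∈ r.index,
      counit (R := ℂ) (r.left j) • ((1 : H) ⊗ₜ[ℂ] (c * r.right j)))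
      = (1 : H) ⊗ₜ[ℂ] (c * x) := by
    have := sum_counit_smul_map_left r
      ((TensorProduct.mk ℂ H H 1) ∘ₗ LinearMap.mulLeft ℂ c)
    simpa using this
  rw [hL2] at hswitch
  rw [hswitch]
  apply Finset.sum_congr rfl
  intro j _
  have : Coalgebra.comul (R := ℂ) (r.right j)
      = ∑ k ∈ (w j).index, (w j).left k ⊗ₜ[ℂ] (w j).right k := (w j).eq.symm
  rw [this, Finset.mul_sum]
  apply Finset.sum_congr rfl
  intro k _
  rw [Algebra.TensorProduct.tmul_mul_tmul]

lemma beta {x : H} {ι_r : Type*} (r : Repr ℂ x ι_r) :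
    ∑ i ∈ r.index, Gmap (r.left i) * Coalgebra.comul (R := ℂ) (r.right i)
    = counit (R := ℂ) x • (1 : H ⊗[ℂ] H) := by
  set u : (i : r.ι) → Repr ℂ (r.left i) (H × H) := fun i => ℛ ℂ _ with hu
  set v : (i : r.ι) → Repr ℂ (r.right i) (H × H) := fun i => ℛ ℂ _ with hv
  have hswitch := switch
    (LinearMap.mul' ℂ (H ⊗[ℂ] H)
      ∘ₗ TensorProduct.map
          ((TensorProduct.comm ℂ H H).toLinearMap ∘ₗ TensorProduct.map 𝑺 𝑺)
          (Coalgebra.comul (R := ℂ))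
      ∘ₗ (TensorProduct.assoc ℂ H H H).symm.toLinearMap) r u v
  simp only [LinearMap.comp_apply, LinearEquiv.coe_coe, assoc_symm_tmul,
    TensorProduct.map_tmul, comm_tmul, LinearMap.mul'_apply] at hswitch
  have hL : ∀ i ∈ r.index,
      (∑ k ∈ (u i).index,
        (𝑺 ((u i).right k) ⊗ₜ[ℂ] 𝑺 ((u i).left k)) * Coalgebra.comul (R := ℂ) (r.right i))
      = Gmap (r.left i) * Coalgebra.comul (R := ℂ) (r.right i) := by
    intro i _
    rw [Gmap_repr (u i), Finset.sum_mul]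
  rw [Finset.sum_congr rfl hL] at hswitch
  rw [hswitch]
  have hR : ∀ i ∈ r.index,
      (∑ k ∈ (v i).index,
        (𝑺 ((v i).left k) ⊗ₜ[ℂ] 𝑺 (r.left i)) * Coalgebra.comul (R := ℂ) ((v i).right k))
      = (1 : H) ⊗ₜ[ℂ] (𝑺 (r.left i) * r.right i) := by
    intro i _
    exact beta0 (𝑺 (r.left i)) (v i)
  rw [Finset.sum_congr rfl hR]
  rw [← TensorProduct.tmul_sum, sum_antipode_mul_eq_smul (R := ℂ) r]
  rw [TensorProduct.tmul_smul]
  rw [Algebra.TensorProduct.one_def]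

lemma comul_antipode (x : H) :
    Coalgebra.comul (R := ℂ) (𝑺 x) = Gmap x := by
  set r := ℛ ℂ x with hr
  set u : (i : r.ι) → Repr ℂ (r.left i) (H × H) := fun i => ℛ ℂ _ with hu
  set v : (i : r.ι) → Repr ℂ (r.right i) (H × H) := fun i => ℛ ℂ _ with hv
  have hswitch := switch
    (LinearMap.mul' ℂ (H ⊗[ℂ] H)
      ∘ₗ TensorProduct.map Gmap
          (LinearMap.mul' ℂ (H ⊗[ℂ] H)
            ∘ₗ TensorProduct.map (Coalgebra.comul (R := ℂ))
                ((Coalgebra.comul (R := ℂ)) ∘ₗ 𝑺))) r u v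
  simp only [LinearMap.comp_apply, TensorProduct.map_tmul, LinearMap.mul'_apply] at hswitch
  have hL : ∀ i ∈ r.index,
      (∑ k ∈ (u i).index,
        Gmap ((u i).left k) *
          (Coalgebra.comul (R := ℂ) ((u i).right k) *
            Coalgebra.comul (R := ℂ) (𝑺 (r.right i))))
      = counit (R := ℂ) (r.left i) • Coalgebra.comul (R := ℂ) (𝑺 (r.right i)) := by
    intro i _
    have : ∀ k, Gmap ((u i).left k) *
          (Coalgebra.comul (R := ℂ) ((u i).right k) *
            Coalgebra.comul (R := ℂ) (𝑺 (r.right i)))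
        = (Gmap ((u i).left k) * Coalgebra.comul (R := ℂ) ((u i).right k)) *
            Coalgebra.comul (R := ℂ) (𝑺 (r.right i)) := by
      intro k; rw [mul_assoc]
    simp only [this, ← Finset.sum_mul]
    rw [beta (u i)]
    simp [smul_mul_assoc]
  have hR : ∀ i ∈ r.index,
      (∑ k ∈ (v i).index,
        Gmap (r.left i) *
          (Coalgebra.comul (R := ℂ) ((v i).left k) *
            Coalgebra.comul (R := ℂ) (𝑺 ((v i).right k))))
      = counit (R := ℂ) (r.right i) • Gmap (r.left i) := by
    intro i _
    rw [← Finset.mul_sum, alpha (v i)]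
    simp [mul_smul_comm]
  rw [Finset.sum_congr rfl hL, Finset.sum_congr rfl hR] at hswitch
  have hL2 : (∑ i ∈ r.index,
      counit (R := ℂ) (r.left i) • Coalgebra.comul (R := ℂ) (𝑺 (r.right i)))
      = Coalgebra.comul (R := ℂ) (𝑺 x) := by
    have := sum_counit_smul_map_left r ((Coalgebra.comul (R := ℂ)) ∘ₗ 𝑺)
    simpa using this
  have hR2 : (∑ i ∈ r.index, counit (R := ℂ) (r.right i) • Gmap (r.left i))
      = Gmap x := sum_counit_smul_map_right r Gmap
  rw [hL2, hR2] at hswitch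
  exact hswitch

lemma comul_antipode_repr {x : H} {ι_r : Type*} (r : Repr ℂ x ι_r) :
    Coalgebra.comul (R := ℂ) (𝑺 x) = ∑ i ∈ r.index, 𝑺 (r.right i) ⊗ₜ[ℂ] 𝑺 (r.left i) :=
  (comul_antipode x).trans (Gmap_repr r)

section Tinv

variable (hS : Function.Bijective (HopfAlgebra.antipode (R := ℂ) (A := H)))

/-- The inverse of the antipode. -/
def Tinv : H →ₗ[ℂ] H :=
  (LinearEquiv.ofBijective (HopfAlgebra.antipode (R := ℂ) (A := H)) hS).symm

lemma S_Tinv (x : H) : 𝑺 (Tinv hS x) = x :=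
  (LinearEquiv.ofBijective (HopfAlgebra.antipode (R := ℂ) (A := H)) hS).apply_symm_apply x

lemma Tinv_S (x : H) : Tinv hS (𝑺 x) = x :=
  (LinearEquiv.ofBijective (HopfAlgebra.antipode (R := ℂ) (A := H)) hS).symm_apply_apply x

lemma Tinv_mul (a b : H) : Tinv hS (a * b) = Tinv hS b * Tinv hS a := by
  apply hS.injective
  rw [S_Tinv, antipode_mul, S_Tinv, S_Tinv]

lemma sum_mul_Tinv {x : H} {ι_r : Type*} (r : Repr ℂ x ι_r) :
    ∑ i ∈ r.index, r.right i * Tinv hS (r.left i) = counit (R := ℂ) x • (1 : H) := by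
  apply hS.injective
  rw [map_sum, map_smul, antipode_one]
  have : ∀ i, 𝑺 (r.right i * Tinv hS (r.left i)) = r.left i * 𝑺 (r.right i) := by
    intro i; rw [antipode_mul, S_Tinv]
  simp only [this]
  rw [sum_mul_antipode_eq_smul (R := ℂ) r]

lemma sum_Tinv_mul {x : H} {ι_r : Type*} (r : Repr ℂ x ι_r) :
    ∑ i ∈ r.index, Tinv hS (r.right i) * r.left i = counit (R := ℂ) x • (1 : H) := by
  apply hS.injective
  rw [map_sum, map_smul, antipode_one]
  have : ∀ i, 𝑺 (Tinv hS (r.right i) * r.left i) = 𝑺 (r.left i) * r.right i := by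
    intro i; rw [antipode_mul, S_Tinv]
  simp only [this]
  rw [sum_antipode_mul_eq_smul (R := ℂ) r]

lemma comul_Tinv {x : H} {ι_r : Type*} (r : Repr ℂ x ι_r) :
    Coalgebra.comul (R := ℂ) (Tinv hS x)
      = ∑ i ∈ r.index, Tinv hS (r.right i) ⊗ₜ[ℂ] Tinv hS (r.left i) := by
  set y := Tinv hS x with hy
  have hx : x = 𝑺 y := (S_Tinv hS x).symm
  set ry := ℛ ℂ y with hry
  have h1 : Coalgebra.comul (R := ℂ) x
      = ∑ j ∈ ry.index, 𝑺 (ry.right j) ⊗ₜ[ℂ] 𝑺 (ry.left j) := by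
    rw [hx]; exact comul_antipode_repr ry
  -- apply `Tinv ⊗ Tinv ∘ comm` to both representations of `comul x`
  have h2 := congrArg (TensorProduct.map (Tinv hS) (Tinv hS)
      ∘ₗ (TensorProduct.comm ℂ H H).toLinearMap) (r.eq.trans h1)
  simp only [LinearMap.comp_apply, map_sum, LinearEquiv.coe_coe, comm_tmul,
    TensorProduct.map_tmul, Tinv_S] at h2
  rw [← ry.eq]
  exact h2.symm

end Tinv
section GroupLike

variable {σ : H} (hσc : Coalgebra.comul (R := ℂ) σ = σ ⊗ₜ[ℂ] σ)
  (hσe : Coalgebra.counit (R := ℂ) σ = 1)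

include hσc hσe in
lemma gl_mul_S : σ * 𝑺 σ = 1 := by
  have := sum_mul_antipode_eq_smul (R := ℂ) (glRepr hσc)
  simpa [glRepr, hσe] using this

include hσc hσe in
lemma gl_S_mul : 𝑺 σ * σ = 1 := by
  have := sum_antipode_mul_eq_smul (R := ℂ) (glRepr hσc)
  simpa [glRepr, hσe] using this

include hσc hσe in
lemma gl_S_S : 𝑺 (𝑺 σ) = σ := by
  have h1 : 𝑺 (𝑺 σ) * 𝑺 σ = 1 := by
    rw [← antipode_mul, gl_mul_S hσc hσe, antipode_one]
  calc 𝑺 (𝑺 σ) = 𝑺 (𝑺 σ) * (𝑺 σ * σ) := by rw [gl_S_mul hσc hσe, mul_one]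
  _ = (𝑺 (𝑺 σ) * 𝑺 σ) * σ := by rw [mul_assoc]
  _ = σ := by rw [h1, one_mul]

include hσc in
lemma gl_comul_S : Coalgebra.comul (R := ℂ) (𝑺 σ) = 𝑺 σ ⊗ₜ[ℂ] 𝑺 σ := by
  have := comul_antipode_repr (glRepr hσc)
  simpa [glRepr] using this

variable (hS : Function.Bijective (HopfAlgebra.antipode (R := ℂ) (A := H)))

include hσc hσe in
lemma gl_Tinv : Tinv hS σ = 𝑺 σ := by
  conv_lhs => rw [← gl_S_S hσc hσe]
  rw [Tinv_S]

lemma gl_Tinv_S : Tinv hS (𝑺 σ) = σ := Tinv_S hS σ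

end GroupLike

section Theta

variable (δ : H →ₐ[ℂ] ℂ)

/-- `h ↦ ∑ δ(h₁) • h₂`. -/
def thetaMap : H →ₗ[ℂ] H :=
  (TensorProduct.lid ℂ H).toLinearMap
    ∘ₗ TensorProduct.map δ.toLinearMap LinearMap.id ∘ₗ Coalgebra.comul

/-- `h ↦ ∑ δ(h₂) • h₁`. -/
def thetaR : H →ₗ[ℂ] H :=
  (TensorProduct.rid ℂ H).toLinearMap
    ∘ₗ TensorProduct.map LinearMap.id δ.toLinearMap ∘ₗ Coalgebra.comul

/-- `h ↦ ∑ δ(S h₁) • h₂`. -/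
def thetaInv : H →ₗ[ℂ] H :=
  (TensorProduct.lid ℂ H).toLinearMap
    ∘ₗ TensorProduct.map (δ.toLinearMap ∘ₗ 𝑺) LinearMap.id ∘ₗ Coalgebra.comul

lemma thetaMap_repr {x : H} {ι_r : Type*} (r : Repr ℂ x ι_r) :
    thetaMap δ x = ∑ i ∈ r.index, δ (r.left i) • r.right i := by
  rw [thetaMap, LinearMap.comp_apply, LinearMap.comp_apply, ← r.eq, map_sum, map_sum]
  simp

lemma thetaR_repr {x : H} {ι_r : Type*} (r : Repr ℂ x ι_r) :
    thetaR δ x = ∑ i ∈ r.index, δ (r.right i) • r.left i := by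
  rw [thetaR, LinearMap.comp_apply, LinearMap.comp_apply, ← r.eq, map_sum, map_sum]
  simp

lemma thetaInv_repr {x : H} {ι_r : Type*} (r : Repr ℂ x ι_r) :
    thetaInv δ x = ∑ i ∈ r.index, δ (𝑺 (r.left i)) • r.right i := by
  rw [thetaInv, LinearMap.comp_apply, LinearMap.comp_apply, ← r.eq, map_sum, map_sum]
  simp

lemma charS {x : H} {ι_r : Type*} (r : Repr ℂ x ι_r) :
    ∑ i ∈ r.index, δ (r.left i) * δ (𝑺 (r.right i)) = counit (R := ℂ) x := by
  have h := congrArg δ (sum_mul_antipode_eq_smul (R := ℂ) r)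
  rw [map_sum] at h
  simpa [map_mul, map_smul] using h

lemma charS' {x : H} {ι_r : Type*} (r : Repr ℂ x ι_r) :
    ∑ i ∈ r.index, δ (𝑺 (r.left i)) * δ (r.right i) = counit (R := ℂ) x := by
  have h := congrArg δ (sum_antipode_mul_eq_smul (R := ℂ) r)
  rw [map_sum] at h
  simpa [map_mul, map_smul] using h

/-- scalar-scalar triple collapse map -/
def sc2 (φ ψ : H →ₗ[ℂ] ℂ) : H ⊗[ℂ] (H ⊗[ℂ] H) →ₗ[ℂ] H :=
  (TensorProduct.lid ℂ H).toLinearMap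
    ∘ₗ TensorProduct.map φ
        ((TensorProduct.lid ℂ H).toLinearMap ∘ₗ TensorProduct.map ψ LinearMap.id)

@[simp] lemma sc2_tmul (φ ψ : H →ₗ[ℂ] ℂ) (p q s : H) :
    sc2 φ ψ (p ⊗ₜ[ℂ] (q ⊗ₜ[ℂ] s)) = φ p • (ψ q • s) := by
  simp [sc2, smul_smul, mul_comm]

lemma thetaInv_thetaMap (h : H) : thetaInv δ (thetaMap δ h) = h := by
  set r := ℛ ℂ h with hr
  set u : (i : r.ι) → Repr ℂ (r.left i) (H × H) := fun i => ℛ ℂ _ with hu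
  set v : (i : r.ι) → Repr ℂ (r.right i) (H × H) := fun i => ℛ ℂ _ with hv
  have hswitch := switch (sc2 δ.toLinearMap (δ.toLinearMap ∘ₗ 𝑺)) r u v
  simp only [sc2_tmul, LinearMap.comp_apply, AlgHom.toLinearMap_apply] at hswitch
  have hL : ∀ i ∈ r.index,
      (∑ k ∈ (u i).index, δ ((u i).left k) • (δ (𝑺 ((u i).right k)) • r.right i))
      = counit (R := ℂ) (r.left i) • r.right i := by
    intro i _
    simp only [smul_smul, ← Finset.sum_smul]
    rw [charS δ (u i)]
  rw [Finset.sum_congr rfl hL, sum_counit_smul_left r] at hswitch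
  rw [thetaMap_repr δ r, map_sum]
  simp only [map_smul]
  refine (Finset.sum_congr rfl ?_).trans hswitch.symm
  intro i _
  rw [thetaInv_repr δ (v i), Finset.smul_sum]

lemma thetaMap_thetaInv (h : H) : thetaMap δ (thetaInv δ h) = h := by
  set r := ℛ ℂ h with hr
  set u : (i : r.ι) → Repr ℂ (r.left i) (H × H) := fun i => ℛ ℂ _ with hu
  set v : (i : r.ι) → Repr ℂ (r.right i) (H × H) := fun i => ℛ ℂ _ with hv
  have hswitch := switch (sc2 (δ.toLinearMap ∘ₗ 𝑺) δ.toLinearMap) r u v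
  simp only [sc2_tmul, LinearMap.comp_apply, AlgHom.toLinearMap_apply] at hswitch
  have hL : ∀ i ∈ r.index,
      (∑ k ∈ (u i).index, δ (𝑺 ((u i).left k)) • (δ ((u i).right k) • r.right i))
      = counit (R := ℂ) (r.left i) • r.right i := by
    intro i _
    simp only [smul_smul, ← Finset.sum_smul]
    rw [charS' δ (u i)]
  rw [Finset.sum_congr rfl hL, sum_counit_smul_left r] at hswitch
  rw [thetaInv_repr δ r, map_sum]
  simp only [map_smul]
  refine (Finset.sum_congr rfl ?_).trans hswitch.symm
  intro i _
  rw [thetaMap_repr δ (v i), Finset.smul_sum]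

end Theta

section Main

variable (δ : H →ₐ[ℂ] ℂ)

lemma tw_repr {x : H} {ι_r : Type*} (r : Repr ℂ x ι_r) :
    twistedAntipode δ x = ∑ i ∈ r.index, δ (r.left i) • 𝑺 (r.right i) := by
  rw [twistedAntipode, LinearMap.comp_apply, LinearMap.comp_apply, ← r.eq, map_sum, map_sum]
  simp

lemma tw_eq_S_theta (x : H) : twistedAntipode δ x = 𝑺 (thetaMap δ x) := by
  set r := ℛ ℂ x with hr
  rw [tw_repr δ r, thetaMap_repr δ r, map_sum]
  simp only [map_smul]

variable (σ : H)

lemma ayd_repr {x : H} {ι_r : Type*} (r : Repr ℂ x ι_r) {κ : Type*} (v : (i : r.ι) → Repr ℂ (r.right i) κ) :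
    aydMap δ σ x = ∑ i ∈ r.index, ∑ k ∈ (v i).index,
      δ ((v i).left k) • (𝑺 ((v i).right k) * σ * r.left i) := by
  have hcom : comul₂ (H := H) x
      = ∑ i ∈ r.index, ∑ k ∈ (v i).index,
          r.left i ⊗ₜ[ℂ] ((v i).left k ⊗ₜ[ℂ] (v i).right k) := by
    rw [comul₂, LinearMap.comp_apply, ← r.eq, map_sum]
    apply Finset.sum_congr rfl
    intro i _
    rw [LinearMap.lTensor_tmul, ← (v i).eq, TensorProduct.tmul_sum]
  rw [aydMap, LinearMap.comp_apply, LinearMap.comp_apply, LinearMap.comp_apply,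
    LinearMap.comp_apply, hcom]
  simp only [map_sum, LinearMap.lTensor_tmul, LinearMap.comp_apply, TensorProduct.map_tmul,
    lid_tmul, AlgHom.toLinearMap_apply, LinearEquiv.coe_coe, comm_tmul, tmul_smul,
    TensorProduct.smul_tmul', map_smul, LinearMap.mulRight_apply, LinearMap.id_coe, id_eq,
    LinearMap.mul'_apply, smul_mul_assoc]

lemma ayd_group {x : H} {ι_r : Type*} (r : Repr ℂ x ι_r) :
    aydMap δ σ x = ∑ j ∈ r.index, twistedAntipode δ (r.right j) * σ * r.left j := by
  set v : (j : r.ι) → Repr ℂ (r.right j) (H × H) := fun j => ℛ ℂ _ with hv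
  rw [ayd_repr δ σ r v]
  apply Finset.sum_congr rfl
  intro j _
  rw [tw_repr δ (v j), Finset.sum_mul, Finset.sum_mul]
  apply Finset.sum_congr rfl
  intro k _
  simp [smul_mul_assoc]

def mulRev : H ⊗[ℂ] H →ₗ[ℂ] H :=
  LinearMap.mul' ℂ H ∘ₗ (TensorProduct.comm ℂ H H).toLinearMap

def tri3R (f g k : H →ₗ[ℂ] H) : H ⊗[ℂ] (H ⊗[ℂ] H) →ₗ[ℂ] H :=
  mulRev ∘ₗ TensorProduct.map f (mulRev ∘ₗ TensorProduct.map g k)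

@[simp] lemma tri3R_tmul (f g k : H →ₗ[ℂ] H) (p q s : H) :
    tri3R f g k (p ⊗ₜ[ℂ] (q ⊗ₜ[ℂ] s)) = k s * g q * f p := by
  simp [tri3R, mulRev]

variable (hS : Function.Bijective (HopfAlgebra.antipode (R := ℂ) (A := H)))

lemma ayd_to_A (hayd : ∀ x, aydMap δ σ x = δ x • σ) (h : H) :
    twistedAntipode δ h * σ = σ * Tinv hS (thetaR δ h) := by
  set r := ℛ ℂ h with hr
  set u : (i : r.ι) → Repr ℂ (r.left i) (H × H) := fun i => ℛ ℂ _ with hu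
  set v : (i : r.ι) → Repr ℂ (r.right i) (H × H) := fun i => ℛ ℂ _ with hv
  have hswitch := switch (tri3R (Tinv hS) LinearMap.id
      (LinearMap.mulRight ℂ σ ∘ₗ twistedAntipode δ)) r u v
  simp only [tri3R_tmul, LinearMap.comp_apply, LinearMap.id_coe, id_eq,
    LinearMap.mulRight_apply] at hswitch
  have hL : ∀ i ∈ r.index,
      (∑ k ∈ (u i).index,
        twistedAntipode δ (r.right i) * σ * (u i).right k * Tinv hS ((u i).left k))
      = counit (R := ℂ) (r.left i) • (twistedAntipode δ (r.right i) * σ) := by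
    intro i _
    simp only [mul_assoc, ← Finset.mul_sum]
    rw [sum_mul_Tinv hS (u i)]
    simp [mul_smul_comm, mul_assoc]
  rw [Finset.sum_congr rfl hL] at hswitch
  have hL2 : (∑ i ∈ r.index,
      counit (R := ℂ) (r.left i) • (twistedAntipode δ (r.right i) * σ))
      = twistedAntipode δ h * σ := by
    have := sum_counit_smul_map_left r (LinearMap.mulRight ℂ σ ∘ₗ twistedAntipode δ)
    simpa using this
  rw [hL2] at hswitch
  have hR : ∀ i ∈ r.index,
      (∑ k ∈ (v i).index,
        twistedAntipode δ ((v i).right k) * σ * (v i).left k * Tinv hS (r.left i))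
      = (δ (r.right i) • σ) * Tinv hS (r.left i) := by
    intro i _
    rw [← Finset.sum_mul, ← ayd_group δ σ (v i), hayd (r.right i)]
  rw [Finset.sum_congr rfl hR] at hswitch
  rw [hswitch, thetaR_repr δ r, map_sum, Finset.mul_sum]
  apply Finset.sum_congr rfl
  intro i _
  rw [map_smul]
  simp [smul_mul_assoc, mul_smul_comm]

lemma A_to_ayd (hA : ∀ x, twistedAntipode δ x * σ = σ * Tinv hS (thetaR δ x)) (h : H) :
    aydMap δ σ h = δ h • σ := by
  set r := ℛ ℂ h with hr
  set u : (i : r.ι) → Repr ℂ (r.left i) (H × H) := fun i => ℛ ℂ _ with hu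
  set v : (i : r.ι) → Repr ℂ (r.right i) (H × H) := fun i => ℛ ℂ _ with hv
  have hswitch := switch (tri3R LinearMap.id (Tinv hS)
      (LinearMap.toSpanSingleton ℂ H σ ∘ₗ δ.toLinearMap)) r u v
  simp only [tri3R_tmul, LinearMap.comp_apply, LinearMap.id_coe, id_eq,
    LinearMap.toSpanSingleton_apply, AlgHom.toLinearMap_apply] at hswitch
  have hL : ∀ i ∈ r.index,
      (∑ k ∈ (u i).index,
        δ (r.right i) • σ * Tinv hS ((u i).right k) * (u i).left k)
      = counit (R := ℂ) (r.left i) • (δ (r.right i) • σ) := by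
    intro i _
    simp only [smul_mul_assoc, mul_assoc, ← Finset.smul_sum, ← Finset.mul_sum]
    rw [sum_Tinv_mul hS (u i)]
    simp [mul_smul_comm, smul_smul, mul_comm]
  rw [Finset.sum_congr rfl hL] at hswitch
  have hL2 : (∑ i ∈ r.index, counit (R := ℂ) (r.left i) • (δ (r.right i) • σ))
      = δ h • σ := by
    have := sum_counit_smul_map_left r
      (LinearMap.toSpanSingleton ℂ H σ ∘ₗ δ.toLinearMap)
    simpa using this
  rw [hL2] at hswitch
  rw [ayd_group δ σ r]
  have hstep : ∀ i ∈ r.index,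
      twistedAntipode δ (r.right i) * σ * r.left i
      = ∑ k ∈ (v i).index, δ ((v i).right k) • σ * Tinv hS ((v i).left k) * r.left i := by
    intro i _
    rw [hA (r.right i), thetaR_repr δ (v i), map_sum, Finset.mul_sum, Finset.sum_mul]
    apply Finset.sum_congr rfl
    intro k _
    rw [map_smul]
    simp [smul_mul_assoc, mul_smul_comm]
  rw [Finset.sum_congr rfl hstep]
  exact hswitch.symm

variable {σ : H}

lemma A_iff_M (hσc : Coalgebra.comul (R := ℂ) σ = σ ⊗ₜ[ℂ] σ)
    (hσe : Coalgebra.counit (R := ℂ) σ = 1) :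
    (∀ x, twistedAntipode δ x * σ = σ * Tinv hS (thetaR δ x))
    ↔ (∀ x, twistedAntipode δ x = σ * Tinv hS (thetaR δ x) * 𝑺 σ) := by
  constructor
  · intro hA x
    calc twistedAntipode δ x = twistedAntipode δ x * (σ * 𝑺 σ) := by
          rw [gl_mul_S hσc hσe, mul_one]
    _ = (twistedAntipode δ x * σ) * 𝑺 σ := by rw [mul_assoc]
    _ = σ * Tinv hS (thetaR δ x) * 𝑺 σ := by rw [hA x]
  · intro hM x
    calc twistedAntipode δ x * σ = σ * Tinv hS (thetaR δ x) * 𝑺 σ * σ := by rw [hM x]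
    _ = σ * Tinv hS (thetaR δ x) * (𝑺 σ * σ) := by rw [mul_assoc]
    _ = σ * Tinv hS (thetaR δ x) := by rw [gl_S_mul hσc hσe, mul_one]

lemma bridge (hσc : Coalgebra.comul (R := ℂ) σ = σ ⊗ₜ[ℂ] σ)
    (hσe : Coalgebra.counit (R := ℂ) σ = 1) (h : H) :
    thetaInv δ (Tinv hS (σ * h * 𝑺 σ)) = σ * Tinv hS (thetaR δ h) * 𝑺 σ := by
  have stepa : Tinv hS (σ * h * 𝑺 σ) = σ * Tinv hS h * 𝑺 σ := by
    rw [Tinv_mul, Tinv_mul, Tinv_S, gl_Tinv hσc hσe hS, mul_assoc]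
  set r := ℛ ℂ h with hr
  have stepb : Coalgebra.comul (R := ℂ) (σ * Tinv hS h * 𝑺 σ)
      = ∑ i ∈ r.index,
          (σ * Tinv hS (r.right i) * 𝑺 σ) ⊗ₜ[ℂ] (σ * Tinv hS (r.left i) * 𝑺 σ) := by
    rw [Bialgebra.comul_mul, Bialgebra.comul_mul, hσc, gl_comul_S hσc, comul_Tinv hS r,
      Finset.mul_sum, Finset.sum_mul]
    apply Finset.sum_congr rfl
    intro i _
    rw [Algebra.TensorProduct.tmul_mul_tmul, Algebra.TensorProduct.tmul_mul_tmul]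
  have stepd : ∀ x : H, δ (𝑺 (σ * x * 𝑺 σ)) = δ (𝑺 x) := by
    intro x
    rw [antipode_mul, antipode_mul, gl_S_S hσc hσe]
    rw [map_mul, map_mul]
    have h1 : δ σ * δ (𝑺 σ) = 1 := by
      rw [← map_mul, gl_mul_S hσc hσe, map_one]
    have h2 : δ (𝑺 σ) * δ σ = 1 := by
      rw [← map_mul, gl_S_mul hσc hσe, map_one]
    linear_combination δ (𝑺 x) * h1
  rw [stepa, thetaInv, LinearMap.comp_apply, LinearMap.comp_apply, stepb, map_sum, map_sum]
  rw [thetaR_repr δ r, map_sum, Finset.mul_sum, Finset.sum_mul]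
  apply Finset.sum_congr rfl
  intro i _
  simp only [TensorProduct.map_tmul, LinearMap.comp_apply, AlgHom.toLinearMap_apply,
    LinearMap.id_coe, id_eq, lid_tmul]
  rw [stepd (Tinv hS (r.right i)), S_Tinv, map_smul]
  simp [smul_mul_assoc, mul_smul_comm]

lemma M_iff_ii (hσc : Coalgebra.comul (R := ℂ) σ = σ ⊗ₜ[ℂ] σ)
    (hσe : Coalgebra.counit (R := ℂ) σ = 1) :
    (∀ x, twistedAntipode δ x = σ * Tinv hS (thetaR δ x) * 𝑺 σ)
    ↔ (∀ x, twistedAntipode δ (twistedAntipode δ x) = σ * x * 𝑺 σ) := by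
  constructor
  · intro hM x
    have h1 : twistedAntipode δ x = thetaInv δ (Tinv hS (σ * x * 𝑺 σ)) := by
      rw [bridge δ hS hσc hσe x]; exact hM x
    rw [tw_eq_S_theta δ (twistedAntipode δ x), h1, thetaMap_thetaInv, S_Tinv]
  · intro hii x
    have h1 : 𝑺 (thetaMap δ (twistedAntipode δ x)) = σ * x * 𝑺 σ := by
      rw [← tw_eq_S_theta δ (twistedAntipode δ x)]; exact hii x
    have h2 : thetaMap δ (twistedAntipode δ x) = Tinv hS (σ * x * 𝑺 σ) := by
      rw [← h1, Tinv_S]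
    have h3 : twistedAntipode δ x = thetaInv δ (Tinv hS (σ * x * 𝑺 σ)) := by
      rw [← h2, thetaInv_thetaMap]
    rw [h3, bridge δ hS hσc hσe x]

end Main

end SaydProof

/-- For a Hopf algebra `H` with invertible antipode, a
character `δ` and a group-like `σ`, the module-comodule `^σℂ_δ` is a stable
right-left anti-Yetter-Drinfeld module over `H` iff `(δ, σ)` is a modular
pair in involution. -/
theorem sayd_iff_modular_pair_in_involution
    (hS : Function.Bijective (HopfAlgebra.antipode (R := ℂ) (A := H)))
    (δ : H →ₐ[ℂ] ℂ) (σ : H) (hσ : IsGroupLike σ) :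
    IsStableAntiYetterDrinfeld δ σ ↔ IsModularPairInInvolution δ σ := by
  obtain ⟨hσe, hσc⟩ := hσ
  rw [IsStableAntiYetterDrinfeld, IsModularPairInInvolution]
  have key : (∀ h : H, aydMap δ σ h = δ h • σ) ↔
      (∀ h : H, twistedAntipode δ (twistedAntipode δ h) =
        σ * h * HopfAlgebra.antipode (R := ℂ) σ) := by
    rw [← SaydProof.M_iff_ii δ hS hσc hσe, ← SaydProof.A_iff_M δ hS hσc hσe]
    constructor
    · intro hayd
      exact SaydProof.ayd_to_A δ σ hS hayd
    · intro hA
      exact SaydProof.A_to_ayd δ σ hS hA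
  exact and_congr Iff.rfl key

end
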